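/- arXiv:1604.05476 — 4 statements merged into one kernel-verified Lean document; each statement's English description precedes it below -/
import Mathlib

section
/- Suppose α_i is finite and 2q ≥ α_i. Then there exists a persistent attack a with ‖a‖_0 ≤ q that is not i-identifiable: there exist an attack ã with ‖ã‖_0 ≤ q whose i-th component signal differs from that of a, disturbances d, d̃ and initial states x0, x̃0 such that y(ã,d̃,x̃0)(k) = y(a,d,x0)(k) for all k ≥ 0. -/
open Filter

noncomputable section

/-- State trajectory of `x(k+1) = A x(k) + B_d d(k) + B_a a(k)` with `x(0) = x0`. -/
def traj {n o m : ℕ} (A : Matrix (Fin n) (Fin n) ℂ) (Bd : Matrix (Fin n) (Fin o) ℂ)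
    (Ba : Matrix (Fin n) (Fin m) ℂ) (a : ℕ → Fin m → ℂ) (d : ℕ → Fin o → ℂ)
    (x0 : Fin n → ℂ) : ℕ → Fin n → ℂ
  | 0 => x0
  | k + 1 => A.mulVec (traj A Bd Ba a d x0 k) + Bd.mulVec (d k) + Ba.mulVec (a k)

/-- Output `y(a,d,x0)(k) = C x(k) + D_d d(k) + D_a a(k)`. -/
def output {n o m p : ℕ} (A : Matrix (Fin n) (Fin n) ℂ) (Bd : Matrix (Fin n) (Fin o) ℂ)
    (Ba : Matrix (Fin n) (Fin m) ℂ) (C : Matrix (Fin p) (Fin n) ℂ)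
    (Dd : Matrix (Fin p) (Fin o) ℂ) (Da : Matrix (Fin p) (Fin m) ℂ)
    (a : ℕ → Fin m → ℂ) (d : ℕ → Fin o → ℂ) (x0 : Fin n → ℂ) (k : ℕ) : Fin p → ℂ :=
  C.mulVec (traj A Bd Ba a d x0 k) + Dd.mulVec (d k) + Da.mulVec (a k)

/-- `‖a‖₀`: the number of component signals of `a` that are not identically zero. -/
def sparsity {m : ℕ} (a : ℕ → Fin m → ℂ) : ℕ := {j : Fin m | ∃ k, a k j ≠ 0}.ncard

/-- A persistent attack does not converge to `0`. -/
def Persistent {m : ℕ} (a : ℕ → Fin m → ℂ) : Prop := ¬ Tendsto a atTop (nhds 0)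

/-- Undetectable: some disturbance and initial state give identically zero output. -/
def Undetectable {n o m p : ℕ} (A : Matrix (Fin n) (Fin n) ℂ) (Bd : Matrix (Fin n) (Fin o) ℂ)
    (Ba : Matrix (Fin n) (Fin m) ℂ) (C : Matrix (Fin p) (Fin n) ℂ)
    (Dd : Matrix (Fin p) (Fin o) ℂ) (Da : Matrix (Fin p) (Fin m) ℂ)
    (a : ℕ → Fin m → ℂ) : Prop :=
  ∃ d x0, ∀ k, output A Bd Ba C Dd Da a d x0 k = 0

/-- Security index `α_i`: minimal `‖a‖₀` over persistent undetectable attacks whose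
`i`-th component signal is not identically zero (`⊤` if none exists). -/
def secIndex {n o m p : ℕ} (A : Matrix (Fin n) (Fin n) ℂ) (Bd : Matrix (Fin n) (Fin o) ℂ)
    (Ba : Matrix (Fin n) (Fin m) ℂ) (C : Matrix (Fin p) (Fin n) ℂ)
    (Dd : Matrix (Fin p) (Fin o) ℂ) (Da : Matrix (Fin p) (Fin m) ℂ) (i : Fin m) : ℕ∞ :=
  sInf {c : ℕ∞ | ∃ a : ℕ → Fin m → ℂ, Persistent a ∧ Undetectable A Bd Ba C Dd Da a ∧
    (∃ k, a k i ≠ 0) ∧ c = (sparsity a : ℕ∞)}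

variable {n o m p : ℕ} (A : Matrix (Fin n) (Fin n) ℂ) (Bd : Matrix (Fin n) (Fin o) ℂ)
  (Ba : Matrix (Fin n) (Fin m) ℂ) (C : Matrix (Fin p) (Fin n) ℂ)
  (Dd : Matrix (Fin p) (Fin o) ℂ) (Da : Matrix (Fin p) (Fin m) ℂ)


theorem traj_add' {n o m : ℕ} (A : Matrix (Fin n) (Fin n) ℂ) (Bd : Matrix (Fin n) (Fin o) ℂ)
    (Ba : Matrix (Fin n) (Fin m) ℂ) (a1 a2 : ℕ → Fin m → ℂ) (d1 d2 : ℕ → Fin o → ℂ)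
    (x1 x2 : Fin n → ℂ) (k : ℕ) :
    traj A Bd Ba (fun k => a1 k + a2 k) (fun k => d1 k + d2 k) (x1 + x2) k
      = traj A Bd Ba a1 d1 x1 k + traj A Bd Ba a2 d2 x2 k := by
  induction k with
  | zero => rfl
  | succ k ih =>
      simp only [traj, ih, Matrix.mulVec_add]
      abel

theorem output_add' {n o m p : ℕ} (A : Matrix (Fin n) (Fin n) ℂ) (Bd : Matrix (Fin n) (Fin o) ℂ)
    (Ba : Matrix (Fin n) (Fin m) ℂ) (C : Matrix (Fin p) (Fin n) ℂ)
    (Dd : Matrix (Fin p) (Fin o) ℂ) (Da : Matrix (Fin p) (Fin m) ℂ)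
    (a1 a2 : ℕ → Fin m → ℂ) (d1 d2 : ℕ → Fin o → ℂ) (x1 x2 : Fin n → ℂ) (k : ℕ) :
    output A Bd Ba C Dd Da (fun k => a1 k + a2 k) (fun k => d1 k + d2 k) (x1 + x2) k
      = output A Bd Ba C Dd Da a1 d1 x1 k + output A Bd Ba C Dd Da a2 d2 x2 k := by
  simp only [output, traj_add', Matrix.mulVec_add]
  abel

/-- if `α_i` is finite and `2q ≥ α_i`, there is a persistent attack of
sparsity at most `q` that is not `i`-identifiable. -/
theorem exists_not_iIdentifiable_of_secIndex_le_two_mul (i : Fin m) (q : ℕ)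
    (hfin : secIndex A Bd Ba C Dd Da i ≠ ⊤)
    (hq : secIndex A Bd Ba C Dd Da i ≤ ((2 * q : ℕ) : ℕ∞)) :
    ∃ a : ℕ → Fin m → ℂ, Persistent a ∧ sparsity a ≤ q ∧
      ∃ (a' : ℕ → Fin m → ℂ) (d d' : ℕ → Fin o → ℂ) (x0 x0' : Fin n → ℂ),
        sparsity a' ≤ q ∧ (fun k => a' k i) ≠ (fun k => a k i) ∧
        ∀ k, output A Bd Ba C Dd Da a' d' x0' k = output A Bd Ba C Dd Da a d x0 k  := by
  classical
  -- the infimum is attained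
  set S : Set ℕ∞ := {c : ℕ∞ | ∃ a : ℕ → Fin m → ℂ, Persistent a ∧
      Undetectable A Bd Ba C Dd Da a ∧ (∃ k, a k i ≠ 0) ∧ c = (sparsity a : ℕ∞)} with hS
  have hne : S.Nonempty := by
    by_contra h
    rw [Set.not_nonempty_iff_eq_empty] at h
    simp [secIndex, ← hS, h] at hfin
  have hmem : sInf S ∈ S := csInf_mem hne
  obtain ⟨astar, hper, ⟨dstar, xstar, hout⟩, hi, hcard⟩ := hmem
  have hcard2 : sparsity astar ≤ 2 * q := by
    have h := hq
    rw [secIndex, ← hS, hcard, Nat.cast_le] at h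
    exact h
  -- split the support
  set T : Set (Fin m) := {j : Fin m | ∃ k, astar k j ≠ 0} with hT
  have hTfin : T.Finite := Set.toFinite _
  obtain ⟨T1, hT1sub, hT1card⟩ := Set.exists_subset_card_eq (min_le_right q T.ncard)
  have hT1le : T1.ncard ≤ q := hT1card ▸ min_le_left _ _
  have hT2le : (T \ T1).ncard ≤ q := by
    rw [Set.ncard_diff hT1sub (Set.toFinite T1), hT1card]
    have hh : T.ncard ≤ 2 * q := hcard2
    omega
  set b1 : ℕ → Fin m → ℂ := fun k j => if j ∈ T1 then astar k j else 0 with hb1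
  set b2 : ℕ → Fin m → ℂ := fun k j => if j ∈ T1 then 0 else astar k j with hb2
  have hsum : ∀ k, b1 k + b2 k = astar k := by
    intro k; funext j
    by_cases h : j ∈ T1 <;> simp [hb1, hb2, h]
  have hspar1 : sparsity b1 ≤ q := by
    refine le_trans (Set.ncard_le_ncard ?_ (Set.toFinite T1)) hT1le
    rintro j ⟨k, hk⟩
    by_contra h
    simp [hb1, h] at hk
  have hspar2 : sparsity b2 ≤ q := by
    refine le_trans (Set.ncard_le_ncard ?_ (hTfin.diff : (T \ T1).Finite)) hT2le
    rintro j ⟨k, hk⟩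
    by_cases h : j ∈ T1
    · simp [hb2, h] at hk
    · refine ⟨⟨k, ?_⟩, h⟩
      simpa [hb2, h] using hk
  -- key claim, symmetric in the two halves
  have key : ∀ c1 c2 : ℕ → Fin m → ℂ, (∀ k, c1 k + c2 k = astar k) → Persistent c1 →
      sparsity c1 ≤ q → sparsity c2 ≤ q →
      ∃ a : ℕ → Fin m → ℂ, Persistent a ∧ sparsity a ≤ q ∧
      ∃ (a' : ℕ → Fin m → ℂ) (d d' : ℕ → Fin o → ℂ) (x0 x0' : Fin n → ℂ),
        sparsity a' ≤ q ∧ (fun k => a' k i) ≠ (fun k => a k i) ∧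
        ∀ k, output A Bd Ba C Dd Da a' d' x0' k = output A Bd Ba C Dd Da a d x0 k := by
    intro c1 c2 hc hcper hc1 hc2
    refine ⟨c1, hcper, hc1, fun k => -(c2 k), dstar, fun _ => 0, xstar, 0, ?_, ?_, ?_⟩
    · refine le_trans (le_of_eq ?_) hc2
      unfold sparsity
      congr 1
      ext j
      simp
    · intro hcontra
      obtain ⟨k, hk⟩ := hi
      have h1 := congrFun hcontra k
      simp only at h1
      have h2 : astar k i = 0 := by
        rw [← hc k]
        simp only [Pi.add_apply]
        rw [← h1]
        simp
      exact hk h2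
    · intro k
      have hadd := output_add' A Bd Ba C Dd Da (fun k => -(c2 k)) astar (fun _ => 0) dstar 0 xstar k
      rw [hout, add_zero] at hadd
      have e1 : (fun k => -(c2 k) + astar k) = c1 := by
        funext k
        rw [← hc k]
        abel
      have e2 : (fun k : ℕ => (0 : Fin o → ℂ) + dstar k) = dstar := by
        funext k; simp
      rw [e1, e2, zero_add] at hadd
      exact hadd.symm
  by_cases hp : Persistent b1
  · exact key b1 b2 hsum hp hspar1 hspar2
  · have h1 : Tendsto b1 atTop (nhds 0) := not_not.mp hp
    have hp2 : Persistent b2 := by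
      intro h2
      apply hper
      have h3 := h1.add h2
      rw [add_zero] at h3
      have e : (fun k => b1 k + b2 k) = astar := funext hsum
      rwa [e] at h3
    refine key b2 b1 (fun k => ?_) hp2 hspar2 hspar1
    rw [← hsum k]; abel
end
end

section
/- Let z0 ∈ ℂ, x0 ∈ ℂ^n, d0 ∈ ℂ^o and a0 ∈ ℂ^m satisfy (A − z0 I) x0 + B_d d0 + B_a a0 = 0 and C x0 + D_d d0 + D_a a0 = 0. Then, taking initial state x(0) = x0, disturbance d(k) = z0^k d0, and attack a(k) = z0^k a0, the state trajectory satisfies x(k) = z0^k x0 for all k ≥ 0 and the output satisfies y(a,d,x0)(k) = 0 for all k ≥ 0; in particular, the exponential attack a(k) = z0^k a0 is undetectable. -/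
open Filter

noncomputable section

variable {n o m p : ℕ} (A : Matrix (Fin n) (Fin n) ℂ) (Bd : Matrix (Fin n) (Fin o) ℂ)
  (Ba : Matrix (Fin n) (Fin m) ℂ) (C : Matrix (Fin p) (Fin n) ℂ)
  (Dd : Matrix (Fin p) (Fin o) ℂ) (Da : Matrix (Fin p) (Fin m) ℂ)

/-- if `(A - z0 I) x0 + B_d d0 + B_a a0 = 0` and
`C x0 + D_d d0 + D_a a0 = 0`, then the exponential attack/disturbance pair gives
state `x(k) = z0^k x0` and identically zero output; in particular the exponential
attack is undetectable. -/
theorem exponential_attack_undetectable (z0 : ℂ) (x0 : Fin n → ℂ)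
    (d0 : Fin o → ℂ) (a0 : Fin m → ℂ)
    (h1 : (A - z0 • (1 : Matrix (Fin n) (Fin n) ℂ)).mulVec x0 +
      Bd.mulVec d0 + Ba.mulVec a0 = 0)
    (h2 : C.mulVec x0 + Dd.mulVec d0 + Da.mulVec a0 = 0) :
    (∀ k, traj A Bd Ba (fun k => z0 ^ k • a0) (fun k => z0 ^ k • d0) x0 k = z0 ^ k • x0) ∧
    (∀ k, output A Bd Ba C Dd Da (fun k => z0 ^ k • a0) (fun k => z0 ^ k • d0) x0 k = 0) ∧
    Undetectable A Bd Ba C Dd Da (fun k => z0 ^ k • a0) := by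
  have key : A.mulVec x0 + Bd.mulVec d0 + Ba.mulVec a0 = z0 • x0 := by
    have := h1
    rw [Matrix.sub_mulVec, Matrix.smul_mulVec, Matrix.one_mulVec] at this
    have h : A.mulVec x0 - z0 • x0 + Bd.mulVec d0 + Ba.mulVec a0 = 0 := this
    linear_combination (norm := abel) h
  have htraj : ∀ k, traj A Bd Ba (fun k => z0 ^ k • a0) (fun k => z0 ^ k • d0) x0 k
      = z0 ^ k • x0 := by
    intro k
    induction k with
    | zero => simp [traj]
    | succ k ih =>
      show A.mulVec _ + Bd.mulVec _ + Ba.mulVec _ = _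
      rw [ih, Matrix.mulVec_smul, Matrix.mulVec_smul, Matrix.mulVec_smul,
        ← smul_add, ← smul_add, key, pow_succ, mul_comm, mul_smul, smul_comm]
  have hout : ∀ k, output A Bd Ba C Dd Da (fun k => z0 ^ k • a0)
      (fun k => z0 ^ k • d0) x0 k = 0 := by
    intro k
    unfold output
    rw [htraj k, Matrix.mulVec_smul, Matrix.mulVec_smul, Matrix.mulVec_smul,
      ← smul_add, ← smul_add, h2, smul_zero]
  exact ⟨htraj, hout, fun k => z0 ^ k • d0, x0, hout⟩
end
end

section
/- Suppose there exists z0 ∈ ℂ with |z0| ≥ 1 such that rank P_d(z0) = rank P_i(z0). Then there exist x0 ∈ ℂ^n and d0 ∈ ℂ^o such that (A − z0 I) x0 + B_d d0 + B_{a,i} = 0 and C x0 + D_d d0 + D_{a,i} = 0. Consequently, the cardinality-one attack a(k) = z0^k e_i (e_i the i-th standard basis vector of ℂ^m) is persistent and undetectable, and the security index satisfies α_i = 1. -/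
open Filter

noncomputable section

/-- The disturbance pencil `P_d(z) = [[A - zI, B_d], [C, D_d]]`. -/
def Pdz {n o p : ℕ} (A : Matrix (Fin n) (Fin n) ℂ) (Bd : Matrix (Fin n) (Fin o) ℂ)
    (C : Matrix (Fin p) (Fin n) ℂ) (Dd : Matrix (Fin p) (Fin o) ℂ) (z : ℂ) :
    Matrix (Fin n ⊕ Fin p) (Fin n ⊕ Fin o) ℂ :=
  Matrix.fromBlocks (A - z • (1 : Matrix (Fin n) (Fin n) ℂ)) Bd C Dd

/-- The pencil `P_i(z)`: `P_d(z)` with the column `[B_{a,i}; D_{a,i}]` appended. -/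
def Piz {n o m p : ℕ} (A : Matrix (Fin n) (Fin n) ℂ) (Bd : Matrix (Fin n) (Fin o) ℂ)
    (Ba : Matrix (Fin n) (Fin m) ℂ) (C : Matrix (Fin p) (Fin n) ℂ)
    (Dd : Matrix (Fin p) (Fin o) ℂ) (Da : Matrix (Fin p) (Fin m) ℂ) (i : Fin m) (z : ℂ) :
    Matrix (Fin n ⊕ Fin p) ((Fin n ⊕ Fin o) ⊕ Unit) ℂ :=
  Matrix.of fun r c =>
    Sum.elim (fun c' => Pdz A Bd C Dd z r c')
      (fun _ => Sum.elim (fun rn => Ba rn i) (fun rp => Da rp i) r) c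

variable {n o m p : ℕ} (A : Matrix (Fin n) (Fin n) ℂ) (Bd : Matrix (Fin n) (Fin o) ℂ)
  (Ba : Matrix (Fin n) (Fin m) ℂ) (C : Matrix (Fin p) (Fin n) ℂ)
  (Dd : Matrix (Fin p) (Fin o) ℂ) (Da : Matrix (Fin p) (Fin m) ℂ)

lemma col_mem_of_rank_eq {n o p : ℕ} (M : Matrix (Fin n ⊕ Fin p) (Fin n ⊕ Fin o) ℂ)
    (N : Matrix (Fin n ⊕ Fin p) ((Fin n ⊕ Fin o) ⊕ Unit) ℂ)
    (h : ∀ r c, N r (Sum.inl c) = M r c) (hr : M.rank = N.rank) :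
    ∃ v, M.mulVec v = fun r => N r (Sum.inr ()) := by
  have hle : LinearMap.range M.mulVecLin ≤ LinearMap.range N.mulVecLin := by
    rintro x ⟨v, rfl⟩
    refine ⟨Sum.elim v 0, ?_⟩
    ext r
    simp [Matrix.mulVecLin_apply, Matrix.mulVec, dotProduct, Fintype.sum_sum_type, h]
  have heq : LinearMap.range M.mulVecLin = LinearMap.range N.mulVecLin :=
    Submodule.eq_of_le_of_finrank_eq hle hr
  have hmem : (fun r => N r (Sum.inr ())) ∈ LinearMap.range N.mulVecLin := by
    refine ⟨Sum.elim 0 (fun _ => 1), ?_⟩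
    ext r
    simp [Matrix.mulVecLin_apply, Matrix.mulVec, dotProduct, Fintype.sum_sum_type]
  rw [← heq] at hmem
  exact hmem

/-- if for some `z0` with `|z0| ≥ 1` one has
`rank P_d(z0) = rank P_i(z0)`, then a masking pair `(x0, d0)` exists for the `i`-th
column, the cardinality-one attack `a(k) = z0^k e_i` is persistent and undetectable,
and `α_i = 1`. -/
theorem secIndex_eq_one_of_rank_eq (i : Fin m) (z0 : ℂ) (hz0 : 1 ≤ ‖z0‖)
    (hrank : (Pdz A Bd C Dd z0).rank = (Piz A Bd Ba C Dd Da i z0).rank) :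
    (∃ (x0 : Fin n → ℂ) (d0 : Fin o → ℂ),
      (A - z0 • (1 : Matrix (Fin n) (Fin n) ℂ)).mulVec x0 + Bd.mulVec d0 +
        (fun r => Ba r i) = 0 ∧
      C.mulVec x0 + Dd.mulVec d0 + (fun r => Da r i) = 0) ∧
    Persistent (fun k : ℕ => z0 ^ k • (Pi.single i 1 : Fin m → ℂ)) ∧
    Undetectable A Bd Ba C Dd Da (fun k : ℕ => z0 ^ k • (Pi.single i 1 : Fin m → ℂ)) ∧
    secIndex A Bd Ba C Dd Da i = 1 := by
  -- masking pair
  obtain ⟨v, hv⟩ := col_mem_of_rank_eq (Pdz A Bd C Dd z0) (Piz A Bd Ba C Dd Da i z0)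
    (fun r c => rfl) hrank
  rw [Pdz, Matrix.fromBlocks_mulVec] at hv
  set x0 : Fin n → ℂ := -(v ∘ Sum.inl) with hx0
  set d0 : Fin o → ℂ := -(v ∘ Sum.inr) with hd0
  have h1 : (A - z0 • (1 : Matrix (Fin n) (Fin n) ℂ)).mulVec x0 + Bd.mulVec d0 +
      (fun r => Ba r i) = 0 := by
    ext r
    have := congrFun hv (Sum.inl r)
    simp only [Sum.elim_inl, Piz, Matrix.of_apply, Sum.elim_inr] at this
    simp only [hx0, hd0, Matrix.mulVec_neg, Pi.add_apply, Pi.neg_apply, Pi.zero_apply]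
    rw [← this]; simp only [Pi.add_apply]; ring
  have h2 : C.mulVec x0 + Dd.mulVec d0 + (fun r => Da r i) = 0 := by
    ext r
    have := congrFun hv (Sum.inr r)
    simp only [Sum.elim_inr, Piz, Matrix.of_apply] at this
    simp only [hx0, hd0, Matrix.mulVec_neg, Pi.add_apply, Pi.neg_apply, Pi.zero_apply]
    rw [← this]; simp only [Pi.add_apply]; ring
  -- persistence
  have hpers : Persistent (fun k : ℕ => z0 ^ k • (Pi.single i 1 : Fin m → ℂ)) := by
    intro h
    have hi : Tendsto (fun k : ℕ => (z0 ^ k • (Pi.single i 1 : Fin m → ℂ)) i) atTop (nhds 0) := by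
      have := tendsto_pi_nhds.mp h i
      simpa using this
    have hi' : Tendsto (fun k : ℕ => z0 ^ k) atTop (nhds 0) := by
      simpa [Pi.single_eq_same] using hi
    have hnorm := hi'.norm
    simp only [norm_zero] at hnorm
    have hb : (1 : ℝ) ≤ 0 := by
      refine ge_of_tendsto hnorm ?_
      filter_upwards with k
      calc (1 : ℝ) = 1 ^ k := (one_pow k).symm
        _ ≤ ‖z0‖ ^ k := pow_le_pow_left₀ zero_le_one hz0 k
        _ = ‖z0 ^ k‖ := (norm_pow z0 k).symm
    linarith
  -- key dynamics facts
  have hBa : Ba.mulVec (Pi.single i 1) = fun r => Ba r i := by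
    ext r; simp [Matrix.mulVec_single]
  have hDa : Da.mulVec (Pi.single i 1) = fun r => Da r i := by
    ext r; simp [Matrix.mulVec_single]
  have hA : A.mulVec x0 + Bd.mulVec d0 + (fun r => Ba r i) = z0 • x0 := by
    have : (A - z0 • (1 : Matrix (Fin n) (Fin n) ℂ)).mulVec x0
        = A.mulVec x0 - z0 • x0 := by
      rw [Matrix.sub_mulVec, Matrix.smul_mulVec, Matrix.one_mulVec]
    rw [this] at h1
    apply eq_of_sub_eq_zero
    rw [← h1]
    abel
  -- undetectability
  have hund : Undetectable A Bd Ba C Dd Da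
      (fun k : ℕ => z0 ^ k • (Pi.single i 1 : Fin m → ℂ)) := by
    refine ⟨fun k => z0 ^ k • d0, x0, ?_⟩
    have htraj : ∀ k, traj A Bd Ba (fun k : ℕ => z0 ^ k • (Pi.single i 1 : Fin m → ℂ))
        (fun k => z0 ^ k • d0) x0 k = z0 ^ k • x0 := by
      intro k
      induction k with
      | zero => simp [traj]
      | succ k ih =>
        rw [traj, ih]
        rw [Matrix.mulVec_smul, Matrix.mulVec_smul, Matrix.mulVec_smul]
        rw [← smul_add, ← smul_add, hBa, hA, pow_succ]
        rw [smul_smul, mul_comm]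
    intro k
    rw [output, htraj]
    rw [Matrix.mulVec_smul, Matrix.mulVec_smul, Matrix.mulVec_smul]
    rw [← smul_add, ← smul_add, hDa, h2, smul_zero]
  refine ⟨⟨x0, d0, h1, h2⟩, hpers, hund, ?_⟩
  -- security index
  have hsp : sparsity (fun k : ℕ => z0 ^ k • (Pi.single i 1 : Fin m → ℂ)) = 1 := by
    have hset : {j : Fin m | ∃ k, (z0 ^ k • (Pi.single i 1 : Fin m → ℂ)) j ≠ 0} = {i} := by
      ext j
      constructor
      · rintro ⟨k, hk⟩
        by_contra hji
        apply hk
        simp [Pi.single_eq_of_ne (by simpa using hji)]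
      · rintro rfl
        exact ⟨0, by simp [Pi.single_eq_same]⟩
    rw [sparsity, hset, Set.ncard_singleton]
  apply le_antisymm
  · apply sInf_le
    exact ⟨_, hpers, hund, ⟨0, by simp [Pi.single_eq_same]⟩, by rw [hsp]; simp⟩
  · apply le_sInf
    rintro c ⟨a, -, -, ⟨k, hk⟩, rfl⟩
    have hpos : 0 < sparsity a := by
      rw [sparsity]
      refine Set.ncard_pos (Set.toFinite _) |>.mpr ⟨i, k, hk⟩
    exact_mod_cast Nat.one_le_cast.mpr hpos
end
end

section
/- Consider the pure sensor-attack setting B_d = 0, B_a = 0, D_d = 0, D_a = I_p (so m = p and y(k) = C x(k) + a(k)). Suppose that for every i ∈ {1,…,p} the system is observable from the single output y_i, i.e., the only v ∈ ℂ^n with C_i A^k v = 0 for all k ∈ {0,…,n−1} is v = 0, where C_i is the i-th row of C. Then for any z0 ∈ ℂ, x0 ∈ ℂ^n and a0 ∈ ℂ^p with a0 ≠ 0 satisfying (A − z0 I) x0 = 0 and C x0 + a0 = 0 (i.e., the exponential attack a(k) = z0^k a0 is undetectable), every entry of a0 is nonzero; in particular ‖a0‖_0 = p, so every undetectable exponential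 sensor attack must corrupt all p sensors. -/
open Matrix

noncomputable section

/-- pure sensor attacks (`y(k) = C x(k) + a(k)`). If the system is
observable from every single output, then any undetectable exponential attack
`a(k) = z0^k a0` with `a0 ≠ 0` has all entries of `a0` nonzero, so `‖a0‖₀ = p`. -/
theorem undetectable_sensor_attack_corrupts_all {n p : ℕ}
    (A : Matrix (Fin n) (Fin n) ℂ) (C : Matrix (Fin p) (Fin n) ℂ)
    (hobs : ∀ i : Fin p, ∀ v : Fin n → ℂ,
      (∀ k < n, C i ⬝ᵥ (A ^ k).mulVec v = 0) → v = 0)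
    (z0 : ℂ) (x0 : Fin n → ℂ) (a0 : Fin p → ℂ) (ha0 : a0 ≠ 0)
    (h1 : (A - z0 • (1 : Matrix (Fin n) (Fin n) ℂ)).mulVec x0 = 0)
    (h2 : C.mulVec x0 + a0 = 0) :
    (∀ i, a0 i ≠ 0) ∧ {i : Fin p | a0 i ≠ 0}.ncard = p := by
  have hAx : A.mulVec x0 = z0 • x0 := by
    have := h1
    rw [Matrix.sub_mulVec, sub_eq_zero] at this
    rw [this, Matrix.smul_mulVec, Matrix.one_mulVec]
  have hpow : ∀ k : ℕ, (A ^ k).mulVec x0 = z0 ^ k • x0 := by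
    intro k
    induction k with
    | zero => simp
    | succ k ih =>
      rw [pow_succ, ← Matrix.mulVec_mulVec, hAx, Matrix.mulVec_smul, ih,
        smul_smul, pow_succ]
      ring_nf
  have hall : ∀ i, a0 i ≠ 0 := by
    intro i hi
    have hCx : C i ⬝ᵥ x0 = 0 := by
      have := congrFun h2 i
      simp only [Pi.add_apply, Pi.zero_apply, hi, add_zero] at this
      exact this
    have hx0 : x0 = 0 := by
      apply hobs i
      intro k _
      rw [hpow, dotProduct_smul, hCx, smul_zero]
    apply ha0
    have : C.mulVec x0 = 0 := by rw [hx0, Matrix.mulVec_zero]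
    rw [this, zero_add] at h2
    exact h2
  refine ⟨hall, ?_⟩
  have : {i : Fin p | a0 i ≠ 0} = Set.univ := Set.eq_univ_of_forall hall
  rw [this, Set.ncard_univ, Nat.card_eq_fintype_card, Fintype.card_fin]
end
end
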